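/- A belt assignment b satisfies Property (E) and Property (F) if and only if there is an injection sequence s whose corresponding belt function equals b. -/

import Mathlib

open Finset

variable {α : Type*}

/-- A mould of type `A` is injected in step `i`: `b i = A` and either `i < N`
or the slot `N` steps earlier did not carry `A`. -/
def Injected (N : ℕ) (b : ℕ → Option α) (A : α) (i : ℕ) : Prop :=
  b i = some A ∧ (i < N ∨ b (i - N) ≠ some A)

/-- The number of moulds of type `A` used by the belt function `b`. -/
noncomputable def MouldsUsed (N : ℕ) (b : ℕ → Option α) (A : α) : ℕ :=
  {i | Injected N b A i}.ncard

/-- A belt assignment: (i) each type `A` occurs exactly `d A` times, (ii) an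
injected mould stays on the belt (period `N`) until the demand of its type is
met, (iii) at most `c A` moulds of type `A` are used. -/
def IsBeltAssignment (N : ℕ) (d c : α → ℕ) (b : ℕ → Option α) : Prop :=
  (∀ A : α, {i | b i = some A}.Finite) ∧
  (∀ A : α, {i | b i = some A}.ncard = d A) ∧
  (∀ (i : ℕ) (A : α), b i = some A →
      b (i + N) = some A ∨ {j | b j = some A ∧ j < i + N}.ncard = d A) ∧
  (∀ A : α, MouldsUsed N b A ≤ c A)

/-- The makespan of `b`: the smallest `s` such that for every type `A` all of
its demand appears among steps `0, …, s - N - 1`. -/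
noncomputable def Makespan (N : ℕ) (d : α → ℕ) (b : ℕ → Option α) : ℕ :=
  sInf {s | ∀ A : α, {j | b j = some A ∧ j < s - N}.ncard = d A}

/-- Property (E): every injection happens before every empty slot. -/
def PropE (N : ℕ) (b : ℕ → Option α) : Prop :=
  ∀ (A : α) (i e : ℕ), Injected N b A i → b e = none → i < e

/-- Property (F): if there is an empty slot `e` and strictly fewer than `c A`
moulds of type `A` are used, then `A` does not occur at any step `i ≥ e`. -/
def PropF (N : ℕ) (c : α → ℕ) (b : ℕ → Option α) : Prop :=
  ∀ (e : ℕ) (A : α), b e = none → MouldsUsed N b A < c A → ∀ i, e ≤ i → b i ≠ some A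

section CorrespondingBelt

variable [Fintype α] [DecidableEq α]

/-- One step of the greedy construction of the belt function corresponding to
an injection sequence. `pre` is the list of slots assigned so far (slot `i`
for `i < pre.length`), `rem` is the not-yet-used tail of the injection
sequence (the pointer position). If the total demand is met, the slot stays
empty. Otherwise, if the slot `N` steps earlier carries a type whose demand
is not yet met, that type stays in the slot. Otherwise the pointer is
advanced past all moulds whose type's demand is already met and, if a mould
remains, it is injected; else the slot stays empty. -/
def beltStep (N : ℕ) (d : α → ℕ) (pre : List (Option α)) (rem : List α) :
    Option α × List α :=
  if pre.reduceOption.length = ∑ A : α, d A then (none, rem)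
  else if N ≤ pre.length ∧
      ∃ A : α, pre.getD (pre.length - N) none = some A ∧ pre.count (some A) < d A then
    (pre.getD (pre.length - N) none, rem)
  else
    match rem.dropWhile (fun A => decide (d A ≤ pre.count (some A))) with
    | [] => (none, [])
    | A :: t => (some A, t)

/-- The state (assigned slots, remaining injection sequence) after `i` steps
of the greedy construction. -/
def beltState (N : ℕ) (d : α → ℕ) (s : List α) : ℕ → List (Option α) × List α
  | 0 => ([], s)
  | i + 1 =>
      let p := beltState N d s i
      let q := beltStep N d p.1 p.2
      (p.1 ++ [q.1], q.2)

/-- The belt function corresponding to the injection sequence `s`. -/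
def corrBelt (N : ℕ) (d : α → ℕ) (s : List α) (i : ℕ) : Option α :=
  (beltState N d s (i + 1)).1.getD i none

end CorrespondingBelt


-- ===================== auxiliary development =====================
section Aux

instance [DecidableEq α] (N : ℕ) (b : ℕ → Option α) (A : α) :
    DecidablePred (Injected N b A) := fun i =>
  decidable_of_iff (b i = some A ∧ (i < N ∨ b (i - N) ≠ some A)) Iff.rfl

/-- prefix count of occurrences -/
def bcnt [DecidableEq α] (b : ℕ → Option α) (i : ℕ) (A : α) : ℕ :=
  ((List.range i).map b).count (some A)

/-- prefix count of injections -/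
noncomputable def injCnt (N : ℕ) (b : ℕ → Option α) (i : ℕ) (A : α) : ℕ :=
  {j | Injected N b A j ∧ j < i}.ncard

lemma ncard_setOf_lt_succ (P : ℕ → Prop) [DecidablePred P] (i : ℕ) :
    {j | P j ∧ j < i + 1}.ncard = {j | P j ∧ j < i}.ncard + (if P i then 1 else 0) := by
  have hfin : {j | P j ∧ j < i}.Finite := (Set.finite_Iio i).subset fun j hj => hj.2
  by_cases h : P i
  · have hs : {j | P j ∧ j < i + 1} = insert i {j | P j ∧ j < i} := by
      ext j
      simp only [Set.mem_setOf_eq, Set.mem_insert_iff, Nat.lt_succ_iff_lt_or_eq]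
      constructor
      · rintro ⟨hp, hj | rfl⟩
        · exact Or.inr ⟨hp, hj⟩
        · exact Or.inl rfl
      · rintro (rfl | ⟨hp, hj⟩)
        · exact ⟨h, Or.inr rfl⟩
        · exact ⟨hp, Or.inl hj⟩
    rw [hs, Set.ncard_insert_of_notMem (by simp) hfin, if_pos h]
  · have hs : {j | P j ∧ j < i + 1} = {j | P j ∧ j < i} := by
      ext j
      simp only [Set.mem_setOf_eq, Nat.lt_succ_iff_lt_or_eq]
      constructor
      · rintro ⟨hp, hj | rfl⟩
        · exact ⟨hp, hj⟩
        · exact absurd hp h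
      · rintro ⟨hp, hj⟩; exact ⟨hp, Or.inl hj⟩
    rw [hs, if_neg h, Nat.add_zero]

lemma countP_range_eq_ncard (P : ℕ → Prop) [DecidablePred P] (i : ℕ) :
    (List.range i).countP (fun j => decide (P j)) = {j | P j ∧ j < i}.ncard := by
  induction i with
  | zero => simp
  | succ n ih =>
      rw [List.range_succ, List.countP_append, ncard_setOf_lt_succ, ih]
      simp [List.countP_cons]

lemma count_map_range_eq_ncard [DecidableEq α] (b : ℕ → Option α) (A : α) (i : ℕ) :
    ((List.range i).map b).count (some A) = {j | b j = some A ∧ j < i}.ncard := by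
  rw [← countP_range_eq_ncard (fun j => b j = some A) i, List.count, List.countP_map]
  apply List.countP_congr
  intro j _
  simp [Function.comp]

lemma bcnt_eq_ncard [DecidableEq α] (b : ℕ → Option α) (i : ℕ) (A : α) :
    bcnt b i A = {j | b j = some A ∧ j < i}.ncard :=
  count_map_range_eq_ncard b A i

lemma injCnt_succ [DecidableEq α] (N : ℕ) (b : ℕ → Option α) (i : ℕ) (A : α) :
    injCnt N b (i + 1) A = injCnt N b i A + (if Injected N b A i then 1 else 0) :=
  ncard_setOf_lt_succ _ i

lemma injCnt_zero [DecidableEq α] (N : ℕ) (b : ℕ → Option α) (A : α) :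
    injCnt N b 0 A = 0 := by
  unfold injCnt
  have : {j | Injected N b A j ∧ j < 0} = ∅ := by ext j; simp
  rw [this, Set.ncard_empty]

lemma injCnt_le_MouldsUsed [DecidableEq α] (N : ℕ) (b : ℕ → Option α) (i : ℕ) (A : α)
    (hfin : {j | Injected N b A j}.Finite) : injCnt N b i A ≤ MouldsUsed N b A :=
  Set.ncard_le_ncard (fun j hj => hj.1) hfin

lemma bcnt_succ [DecidableEq α] (b : ℕ → Option α) (i : ℕ) (A : α) :
    bcnt b (i + 1) A = bcnt b i A + (if b i = some A then 1 else 0) := by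
  unfold bcnt
  rw [List.range_succ, List.map_append, List.count_append]
  simp [List.count_cons, beq_iff_eq]

lemma bcnt_mono [DecidableEq α] (b : ℕ → Option α) {i j : ℕ} (h : i ≤ j) (A : α) :
    bcnt b i A ≤ bcnt b j A := by
  induction j with
  | zero =>
      have : i = 0 := by omega
      subst this; exact le_rfl
  | succ n ih =>
      rcases Nat.lt_or_ge i (n+1) with h' | h'
      · exact le_trans (ih (by omega)) (by rw [bcnt_succ]; omega)
      · have : i = n + 1 := by omega
        subst this; exact le_rfl

lemma reduceOption_length_eq [Fintype α] [DecidableEq α] (l : List (Option α)) :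
    l.reduceOption.length = ∑ A : α, l.count (some A) := by
  induction l with
  | nil => simp
  | cons o t ih =>
      cases o with
      | none => simpa [List.reduceOption_cons_of_none, List.count_cons] using ih
      | some a =>
          rw [List.reduceOption_cons_of_some, List.length_cons, ih]
          simp only [List.count_cons, beq_iff_eq, Option.some.injEq]
          rw [Finset.sum_add_distrib]
          congr 1
          simp [eq_comm]

lemma getD_map_range {β : Type*} (f : ℕ → Option β) {j i : ℕ} (h : j < i) :
    ((List.range i).map f).getD j none = f j := by
  rw [List.getD_eq_getElem?_getD, List.getElem?_map, List.getElem?_range h]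
  rfl

lemma dropWhile_eq_cons_head {β : Type*} (p : β → Bool) (l : List β) (a : β) (t : List β)
    (h : l.dropWhile p = a :: t) : p a = false := by
  induction l with
  | nil => simp at h
  | cons x xs ih =>
      rw [List.dropWhile_cons] at h
      by_cases hx : p x = true
      · rw [if_pos hx] at h; exact ih h
      · rw [if_neg hx] at h
        cases h
        simpa using hx

end Aux

section Aux2
variable [Fintype α] [DecidableEq α] (N : ℕ) (d : α → ℕ) (s : List α)

lemma beltState_succ (i : ℕ) :
    beltState N d s (i + 1) =
      ((beltState N d s i).1 ++ [(beltStep N d (beltState N d s i).1 (beltState N d s i).2).1],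
        (beltStep N d (beltState N d s i).1 (beltState N d s i).2).2) := rfl

lemma length_pre (i : ℕ) : (beltState N d s i).1.length = i := by
  induction i with
  | zero => rfl
  | succ n ih => rw [beltState_succ]; simp [ih]

lemma corrBelt_eq_step (i : ℕ) :
    corrBelt N d s i = (beltStep N d (beltState N d s i).1 (beltState N d s i).2).1 := by
  have key : ∀ (l : List (Option α)) (a : Option α), (l ++ [a]).getD l.length none = a := by
    intro l a
    rw [List.getD_eq_getElem?_getD, List.getElem?_concat_length]
    rfl
  have h := length_pre N d s i
  have := key (beltState N d s i).1
    (beltStep N d (beltState N d s i).1 (beltState N d s i).2).1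
  rw [h] at this
  unfold corrBelt
  rw [beltState_succ]
  exact this

lemma pre_eq (i : ℕ) :
    (beltState N d s i).1 = (List.range i).map (corrBelt N d s) := by
  induction i with
  | zero => rfl
  | succ n ih =>
      rw [beltState_succ, List.range_succ, List.map_append, ← ih]
      simp only [List.map_cons, List.map_nil]
      rw [corrBelt_eq_step]

lemma corr_cases (hN : 0 < N) (i : ℕ) :
    (∑ A : α, bcnt (corrBelt N d s) i A = ∑ A : α, d A ∧ corrBelt N d s i = none ∧
        (beltState N d s (i+1)).2 = (beltState N d s i).2) ∨
    ((¬ ∑ A : α, bcnt (corrBelt N d s) i A = ∑ A : α, d A) ∧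
      ∃ A, N ≤ i ∧ corrBelt N d s (i - N) = some A ∧ bcnt (corrBelt N d s) i A < d A ∧
        corrBelt N d s i = some A ∧ (beltState N d s (i+1)).2 = (beltState N d s i).2) ∨
    ((¬ ∑ A : α, bcnt (corrBelt N d s) i A = ∑ A : α, d A) ∧
      ¬(N ≤ i ∧ ∃ A, corrBelt N d s (i - N) = some A ∧ bcnt (corrBelt N d s) i A < d A) ∧
      ((∃ A t, (beltState N d s i).2.dropWhile
            (fun B => decide (d B ≤ bcnt (corrBelt N d s) i B)) = A :: t ∧
          bcnt (corrBelt N d s) i A < d A ∧ corrBelt N d s i = some A ∧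
          (beltState N d s (i+1)).2 = t) ∨
       ((beltState N d s i).2.dropWhile
            (fun B => decide (d B ≤ bcnt (corrBelt N d s) i B)) = [] ∧
          corrBelt N d s i = none ∧ (beltState N d s (i+1)).2 = []))) := by
  have hlen := length_pre N d s i
  have hc : ∀ B : α, (beltState N d s i).1.count (some B) = bcnt (corrBelt N d s) i B := by
    intro B; rw [pre_eq]; rfl
  have hro : (beltState N d s i).1.reduceOption.length
      = ∑ A : α, bcnt (corrBelt N d s) i A := by
    rw [reduceOption_length_eq]
    exact Finset.sum_congr rfl fun A _ => hc A
  have hstep := corrBelt_eq_step N d s i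
  have hsnd : (beltState N d s (i+1)).2
      = (beltStep N d (beltState N d s i).1 (beltState N d s i).2).2 := rfl
  have hpfun : (fun B : α => decide (d B ≤ (beltState N d s i).1.count (some B)))
      = (fun B : α => decide (d B ≤ bcnt (corrBelt N d s) i B)) := by
    funext B; rw [hc]
  have hgd : N ≤ i →
      (beltState N d s i).1.getD ((beltState N d s i).1.length - N) none
        = corrBelt N d s (i - N) := by
    intro hNi
    rw [hlen, pre_eq]
    exact getD_map_range _ (Nat.sub_lt (lt_of_lt_of_le hN hNi) hN)
  by_cases h1 : (beltState N d s i).1.reduceOption.length = ∑ A : α, d A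
  · refine Or.inl ⟨by rw [← hro]; exact h1, ?_, ?_⟩
    · rw [hstep]; simp only [beltStep]; rw [if_pos h1]
    · rw [hsnd]; simp only [beltStep]; rw [if_pos h1]
  · have h1' : ¬ ∑ A : α, bcnt (corrBelt N d s) i A = ∑ A : α, d A := by
      rw [← hro]; exact h1
    by_cases h2 : N ≤ (beltState N d s i).1.length ∧ ∃ A : α,
        (beltState N d s i).1.getD ((beltState N d s i).1.length - N) none = some A ∧
        (beltState N d s i).1.count (some A) < d A
    · obtain ⟨hNi, A, hA, hAc⟩ := h2
      have hNi' : N ≤ i := by rw [← hlen]; exact hNi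
      refine Or.inr (Or.inl ⟨h1', A, hNi', by rw [← hgd hNi']; exact hA,
        by rw [← hc]; exact hAc, ?_, ?_⟩)
      · rw [hstep]; simp only [beltStep]
        rw [if_neg h1, if_pos ⟨hNi, A, hA, hAc⟩]
        exact hA
      · rw [hsnd]; simp only [beltStep]
        rw [if_neg h1, if_pos ⟨hNi, A, hA, hAc⟩]
    · have h2' : ¬(N ≤ i ∧ ∃ A : α, corrBelt N d s (i - N) = some A ∧
          bcnt (corrBelt N d s) i A < d A) := by
        rintro ⟨hNi, A, hA, hAc⟩
        exact h2 ⟨by rw [hlen]; exact hNi, A, by rw [hgd hNi]; exact hA, by rw [hc]; exact hAc⟩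
      rcases hdw : (beltState N d s i).2.dropWhile
          (fun B : α => decide (d B ≤ (beltState N d s i).1.count (some B))) with _ | ⟨A, t⟩
      · refine Or.inr (Or.inr ⟨h1', h2', Or.inr ⟨by rw [← hpfun]; exact hdw, ?_, ?_⟩⟩)
        · rw [hstep]; simp only [beltStep]; rw [if_neg h1, if_neg h2, hdw]
        · rw [hsnd]; simp only [beltStep]; rw [if_neg h1, if_neg h2, hdw]
      · have hAf := dropWhile_eq_cons_head _ _ _ _ hdw
        have hAc : bcnt (corrBelt N d s) i A < d A := by
          rw [← hc]
          simp only [decide_eq_false_iff_not, not_le] at hAf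
          exact hAf
        refine Or.inr (Or.inr ⟨h1', h2', Or.inl ⟨A, t, by rw [← hpfun]; exact hdw, hAc, ?_, ?_⟩⟩)
        · rw [hstep]; simp only [beltStep]; rw [if_neg h1, if_neg h2, hdw]
        · rw [hsnd]; simp only [beltStep]; rw [if_neg h1, if_neg h2, hdw]

end Aux2

section Aux3
variable [Fintype α] [DecidableEq α] (N : ℕ) (d : α → ℕ) (s : List α)

lemma corr_some (hN : 0 < N) {i : ℕ} {A : α} (h : corrBelt N d s i = some A) :
    bcnt (corrBelt N d s) i A < d A := by
  rcases corr_cases N d s hN i with ⟨_, h0, _⟩ | ⟨_, A', _, _, hA'c, hA'eq, _⟩ |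
    ⟨_, _, ⟨A', t, _, hA'c, hA'eq, _⟩ | ⟨_, h0, _⟩⟩
  · rw [h] at h0; exact absurd h0 (by simp)
  · rw [h] at hA'eq
    obtain rfl := Option.some_inj.mp hA'eq
    exact hA'c
  · rw [h] at hA'eq
    obtain rfl := Option.some_inj.mp hA'eq
    exact hA'c
  · rw [h] at h0; exact absurd h0 (by simp)

lemma cnt_le (hN : 0 < N) (i : ℕ) (A : α) : bcnt (corrBelt N d s) i A ≤ d A := by
  induction i with
  | zero => simp [bcnt]
  | succ n ih =>
      rw [bcnt_succ]
      by_cases hbi : corrBelt N d s n = some A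
      · have := corr_some N d s hN hbi
        rw [if_pos hbi]; omega
      · rw [if_neg hbi]; omega

lemma corr_none_of_totalMet (hN : 0 < N) {i j : ℕ} (hij : i ≤ j)
    (h : ∑ A : α, bcnt (corrBelt N d s) i A = ∑ A : α, d A) :
    corrBelt N d s j = none := by
  have step : ∀ k, (∑ A : α, bcnt (corrBelt N d s) k A = ∑ A : α, d A) →
      corrBelt N d s k = none ∧
      (∑ A : α, bcnt (corrBelt N d s) (k+1) A = ∑ A : α, d A) := by
    intro k hk
    have hnone : corrBelt N d s k = none := by
      rcases corr_cases N d s hN k with ⟨_, h0, _⟩ | ⟨h1, _⟩ | ⟨h1, _, _⟩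
      · exact h0
      · exact absurd hk h1
      · exact absurd hk h1
    refine ⟨hnone, ?_⟩
    rw [← hk]
    apply Finset.sum_congr rfl
    intro A _
    rw [bcnt_succ, if_neg (by simp [hnone]), Nat.add_zero]
  have tm : ∀ j, i ≤ j → ∑ A : α, bcnt (corrBelt N d s) j A = ∑ A : α, d A := by
    intro j hj
    induction j, hj using Nat.le_induction with
    | base => exact h
    | succ n hn ih => exact (step n ih).2
  exact (step j (tm j hij)).1

lemma rem_nil_ge (hN : 0 < N) {i j : ℕ} (hij : i ≤ j)
    (h : (beltState N d s i).2 = []) : (beltState N d s j).2 = [] := by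
  induction j, hij using Nat.le_induction with
  | base => exact h
  | succ n hn ih =>
      rcases corr_cases N d s hN n with ⟨_, _, hrem⟩ | ⟨_, A', _, _, _, _, hrem⟩ |
        ⟨_, _, ⟨A', t, hdw, _, _, _⟩ | ⟨_, _, hrem⟩⟩
      · rw [hrem, ih]
      · rw [hrem, ih]
      · rw [ih] at hdw; simp at hdw
      · exact hrem

lemma not_injected_of_rem_nil (hN : 0 < N) {i : ℕ}
    (h : (beltState N d s i).2 = []) (A : α) : ¬ Injected N (corrBelt N d s) A i := by
  rintro ⟨hsome, hor⟩
  rcases corr_cases N d s hN i with ⟨_, h0, _⟩ | ⟨_, A', hNi, hprev, _, heq, _⟩ |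
    ⟨_, _, ⟨A', t, hdw, _, _, _⟩ | ⟨_, h0, _⟩⟩
  · rw [hsome] at h0; exact absurd h0 (by simp)
  · rw [hsome] at heq
    obtain rfl := Option.some_inj.mp heq
    rcases hor with hor | hor
    · omega
    · exact hor hprev
  · rw [h] at hdw; simp at hdw
  · rw [hsome] at h0; exact absurd h0 (by simp)

lemma propE_corr (hN : 0 < N) : PropE N (corrBelt N d s) := by
  intro A i e hinj hne
  by_contra hlt
  push_neg at hlt
  have hei : e ≠ i := by
    intro h
    rw [h, hinj.1] at hne
    exact absurd hne (by simp)
  have helt : e < i := lt_of_le_of_ne hlt hei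
  rcases corr_cases N d s hN e with ⟨htm, _, _⟩ | ⟨_, A', _, _, _, heq, _⟩ |
    ⟨_, _, ⟨A', t, _, _, heq, _⟩ | ⟨_, _, hrem⟩⟩
  · have := corr_none_of_totalMet N d s hN (le_of_lt helt) htm
    rw [hinj.1] at this; exact absurd this (by simp)
  · rw [heq] at hne; exact absurd hne (by simp)
  · rw [heq] at hne; exact absurd hne (by simp)
  · exact not_injected_of_rem_nil N d s hN (rem_nil_ge N d s hN helt hrem) A hinj

lemma K_inv (hN : 0 < N) (A : α) (i : ℕ) :
    s.count A = injCnt N (corrBelt N d s) i A + (beltState N d s i).2.count A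
    ∨ bcnt (corrBelt N d s) i A = d A := by
  induction i with
  | zero =>
      left
      rw [injCnt_zero, Nat.zero_add]
      rfl
  | succ n ih =>
      rcases ih with hK | hEq
      · rcases corr_cases N d s hN n with ⟨_, hnone, hrem⟩ |
          ⟨_, A', hNi, hprev, hA'c, heq, hrem⟩ |
          ⟨_, hkeep, ⟨A', t, hdw, hA'c, heq, hrem⟩ | ⟨hdw, hnone, hrem⟩⟩
        · left
          rw [hrem, injCnt_succ, if_neg (by rintro ⟨h1, _⟩; rw [hnone] at h1; exact absurd h1 (by simp)),
            Nat.add_zero]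
          exact hK
        · left
          rw [hrem, injCnt_succ, if_neg ?_, Nat.add_zero]
          · exact hK
          · rintro ⟨h1, h2⟩
            rw [heq] at h1
            obtain rfl := Option.some_inj.mp h1
            rcases h2 with h2 | h2
            · omega
            · exact h2 hprev
        · -- pop-cons
          set p : α → Bool := fun B => decide (d B ≤ bcnt (corrBelt N d s) n B) with hp
          have hsplit := List.takeWhile_append_dropWhile (p := p) (l := (beltState N d s n).2)
          have hcc := congrArg (List.count A) hsplit
          rw [List.count_append] at hcc
          by_cases hmem : A ∈ (beltState N d s n).2.takeWhile p
          · have hpA := List.mem_takeWhile_imp hmem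
            rw [hp] at hpA
            simp only [decide_eq_true_eq] at hpA
            have hle := cnt_le N d s hN n A
            have hEq' : bcnt (corrBelt N d s) n A = d A := le_antisymm hle hpA
            right
            rw [bcnt_succ, if_neg ?_, Nat.add_zero]
            · exact hEq'
            · intro hAB
              rw [heq] at hAB
              obtain rfl := Option.some_inj.mp hAB
              omega
          · have h0 : ((beltState N d s n).2.takeWhile p).count A = 0 :=
              List.count_eq_zero_of_not_mem hmem
            have hinj' : Injected N (corrBelt N d s) A' n := by
              refine ⟨heq, ?_⟩
              by_cases hiN : n < N
              · exact Or.inl hiN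
              · refine Or.inr fun hpv => hkeep ⟨not_lt.mp hiN, A', hpv, hA'c⟩
            left
            rw [hrem, injCnt_succ]
            rw [hdw, List.count_cons] at hcc
            by_cases hAA : A = A'
            · subst hAA
              rw [if_pos hinj']
              simp at hcc
              omega
            · rw [if_neg (by rintro ⟨h1, _⟩; rw [heq] at h1; exact hAA (Option.some_inj.mp h1).symm)]
              have hf : (A' == A) = false := by simp [Ne.symm hAA]
              simp [hf] at hcc
              omega
        · -- pop-nil
          by_cases hmem : A ∈ (beltState N d s n).2
          · have hpA := List.dropWhile_eq_nil_iff.mp hdw A hmem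
            simp only [decide_eq_true_eq] at hpA
            have hle := cnt_le N d s hN n A
            right
            rw [bcnt_succ, if_neg (by rw [hnone]; simp), Nat.add_zero]
            omega
          · left
            have h0 : (beltState N d s n).2.count A = 0 := List.count_eq_zero_of_not_mem hmem
            rw [hrem, injCnt_succ,
              if_neg (by rintro ⟨h1, _⟩; rw [hnone] at h1; exact absurd h1 (by simp))]
            simp only [List.count_nil]
            omega
      · right
        rw [bcnt_succ]
        by_cases hbi : corrBelt N d s n = some A
        · have := corr_some N d s hN hbi
          omega
        · rw [if_neg hbi, Nat.add_zero]
          exact hEq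

lemma propF_corr (c : α → ℕ) (hN : 0 < N)
    (hfin : ∀ A : α, {j | Injected N (corrBelt N d s) A j}.Finite)
    (hcount : ∀ A : α, s.count A = c A) : PropF N c (corrBelt N d s) := by
  intro e A hne hused i hei
  rcases corr_cases N d s hN e with ⟨htm, _, _⟩ | ⟨_, A', _, _, _, heq, _⟩ |
    ⟨_, _, ⟨A', t, _, _, heq, _⟩ | ⟨_, _, hrem⟩⟩
  · rw [corr_none_of_totalMet N d s hN hei htm]; simp
  · rw [heq] at hne; exact absurd hne (by simp)
  · rw [heq] at hne; exact absurd hne (by simp)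
  · rcases K_inv N d s hN A (e+1) with hK | hEq
    · exfalso
      rw [hrem] at hK
      simp only [List.count_nil, Nat.add_zero] at hK
      have h1 := injCnt_le_MouldsUsed N (corrBelt N d s) (e+1) A (hfin A)
      rw [hcount A] at hK
      unfold MouldsUsed at *
      omega
    · intro hsome
      rcases eq_or_lt_of_le hei with rfl | hlt
      · rw [hsome] at hne; exact absurd hne (by simp)
      · have h1 := cnt_le N d s hN (i+1) A
        have h2 : bcnt (corrBelt N d s) (i+1) A = bcnt (corrBelt N d s) i A + 1 := by
          rw [bcnt_succ, if_pos hsome]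
        have h3 := bcnt_mono (corrBelt N d s) (show e+1 ≤ i by omega) A
        omega

end Aux3

section Aux4
variable [Fintype α] [DecidableEq α]

/-- the type injected at step `j`, if any -/
def injAt [DecidableEq α] (N : ℕ) (b : ℕ → Option α) (j : ℕ) : Option α :=
  if j < N ∨ b (j - N) ≠ b j then b j else none

lemma injAt_eq_some {N : ℕ} {b : ℕ → Option α} {j : ℕ} {A : α} :
    injAt N b j = some A ↔ Injected N b A j := by
  unfold injAt Injected
  by_cases h : j < N ∨ b (j - N) ≠ b j
  · rw [if_pos h]
    constructor
    · intro hb'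
      refine ⟨hb', ?_⟩
      rcases h with h | h
      · exact Or.inl h
      · rw [hb'] at h; exact Or.inr h
    · exact fun hi => hi.1
  · rw [if_neg h]
    push_neg at h
    constructor
    · intro hc; exact absurd hc (by simp)
    · rintro ⟨h1, h2 | h2⟩
      · exact absurd h2 (by omega)
      · exact absurd (h.2.trans h1) h2

lemma forward_exists (N : ℕ) (hN : 0 < N) (d c : α → ℕ)
    (b : ℕ → Option α) (hfin : ∀ A : α, {i | b i = some A}.Finite)
    (hncard : ∀ A : α, {i | b i = some A}.ncard = d A)
    (hstay : ∀ (i : ℕ) (A : α), b i = some A →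
      b (i + N) = some A ∨ {j | b j = some A ∧ j < i + N}.ncard = d A)
    (hcap : ∀ A : α, MouldsUsed N b A ≤ c A)
    (hE : PropE N b) (hF : PropF N c b) :
    ∃ s : List α, (∀ A : α, s.count A = c A) ∧ ∀ i : ℕ, corrBelt N d s i = b i := by
  classical
  -- a bound beyond all occupied slots
  have hUfin : {i | b i ≠ none}.Finite := by
    have : {i | b i ≠ none} = ⋃ A ∈ (Finset.univ : Finset α), {i | b i = some A} := by
      ext i
      simp only [Set.mem_setOf_eq, Set.mem_iUnion, Option.ne_none_iff_exists']
      constructor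
      · rintro ⟨A, hA⟩; exact ⟨A, Finset.mem_univ A, hA⟩
      · rintro ⟨A, _, hA⟩; exact ⟨A, hA⟩
    rw [this]
    exact Set.Finite.biUnion (Finset.univ : Finset α).finite_toSet (fun A _ => hfin A)
  obtain ⟨m, hm⟩ := hUfin.bddAbove
  set M := m + 1 with hM
  have hMlt : ∀ j, b j ≠ none → j < M := fun j hj => Nat.lt_succ_of_le (hm hj)
  -- basic counting facts about b
  have hble : ∀ (i : ℕ) (A : α), bcnt b i A ≤ d A := by
    intro i A
    rw [bcnt_eq_ncard, ← hncard A]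
    exact Set.ncard_le_ncard (fun j hj => hj.1) (hfin A)
  have hinj_cnt : ∀ (i : ℕ) (A : α), b i = some A → bcnt b i A < d A := by
    intro i A h
    have h1 := hble (i+1) A
    rw [bcnt_succ, if_pos h] at h1
    omega
  have hbnext : ∀ (i : ℕ) (A : α), N ≤ i → b (i - N) = some A → bcnt b i A < d A →
      b i = some A := by
    intro i A hNi hprev hcnt
    rcases hstay (i - N) A hprev with h | h
    · rwa [Nat.sub_add_cancel hNi] at h
    · rw [Nat.sub_add_cancel hNi] at h
      rw [bcnt_eq_ncard] at hcnt
      omega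
  have hsum_none : ∀ i, (∑ A : α, bcnt b i A = ∑ A : α, d A) → ∀ j, i ≤ j → b j = none := by
    intro i htm j hij
    have hall : ∀ A : α, bcnt b i A = d A := by
      have := (Finset.sum_eq_sum_iff_of_le (fun A _ => hble i A)).mp htm
      intro A
      exact this A (Finset.mem_univ A)
    by_contra hne
    obtain ⟨A, hA⟩ := Option.ne_none_iff_exists'.mp hne
    have h1 := hinj_cnt j A hA
    have h2 := bcnt_mono b hij A
    rw [hall A] at h2
    omega
  -- demand of A completely placed before any empty slot when capacity remains
  have hdone : ∀ (e : ℕ) (A : α), b e = none → MouldsUsed N b A < c A →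
      bcnt b e A = d A := by
    intro e A he hu
    have hocc : ∀ j, b j = some A → j < e := by
      intro j hj
      by_contra hje
      exact hF e A he hu j (by omega) hj
    rw [bcnt_eq_ncard, ← hncard A]
    congr 1
    ext j
    simp only [Set.mem_setOf_eq]
    exact ⟨fun h => h.1, fun h => ⟨h, hocc j h⟩⟩
  -- the injection sequence
  set pad : List α :=
    (Finset.univ : Finset α).toList.flatMap
      (fun A => List.replicate (c A - MouldsUsed N b A) A) with hpad
  set injL : ℕ → List α := fun i => (List.range' i (M - i)).filterMap (injAt N b) with hinjL
  set s : List α := injL 0 ++ pad with hs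
  -- basic facts about injL
  have hinjL_ge : ∀ i, M ≤ i → injL i = [] := by
    intro i hi
    rw [hinjL]
    simp only
    rw [Nat.sub_eq_zero_of_le hi]
    rfl
  have hinjL_step : ∀ i, i < M →
      injL i = ((injAt N b i).toList) ++ injL (i + 1) := by
    intro i hi
    rw [hinjL]
    simp only
    rw [show M - i = (M - (i+1)) + 1 by omega, List.range'_succ, List.filterMap_cons]
    rcases h : injAt N b i with _ | A
    · simp
    · simp
  have hinjL_none : ∀ i, injAt N b i = none → injL i = injL (i + 1) := by
    intro i h
    rcases Nat.lt_or_ge i M with hi | hi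
    · rw [hinjL_step i hi, h]; rfl
    · rw [hinjL_ge i hi, hinjL_ge (i+1) (by omega)]
  have hinjL_nil : ∀ i, (∀ j, i ≤ j → injAt N b j = none) → injL i = [] := by
    intro i h
    rw [hinjL]
    simp only
    rw [List.filterMap_eq_nil_iff]
    intro j hj
    exact h j (List.mem_range'_1.mp hj).1
  -- membership in pad
  have hpad_mem : ∀ A : α, A ∈ pad → MouldsUsed N b A < c A := by
    intro A hA
    rw [hpad] at hA
    simp only [List.mem_flatMap, List.mem_replicate] at hA
    obtain ⟨B, _, hrep⟩ := hA
    obtain ⟨hpos, rfl⟩ := hrep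
    omega
  -- counts
  have hcount : ∀ A : α, s.count A = c A := by
    intro A
    rw [hs, List.count_append]
    have h1 : (injL 0).count A = MouldsUsed N b A := by
      rw [hinjL]
      simp only
      rw [Nat.sub_zero, ← List.range_eq_range', List.count_filterMap]
      have : ∀ j, ((injAt N b j == some A) = true) ↔ Injected N b A j := by
        intro j
        rw [beq_iff_eq]
        exact injAt_eq_some
      rw [List.countP_congr (fun j _ => by
        rw [show (injAt N b j == some A) = decide (Injected N b A j) by
          rcases Decidable.em (Injected N b A j) with h | h
          · simp [h, (this j).mpr h]
          · simp only [h, decide_false]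
            by_contra hne
            simp only [Bool.not_eq_false] at hne
            exact h ((this j).mp hne)])]
      rw [countP_range_eq_ncard]
      unfold MouldsUsed
      congr 1
      ext j
      simp only [Set.mem_setOf_eq]
      refine ⟨fun h => h.1, fun h => ⟨h, ?_⟩⟩
      exact hMlt j (by rw [h.1]; simp)
    have h2 : pad.count A = c A - MouldsUsed N b A := by
      rw [hpad, List.count_flatMap]
      rw [Finset.sum_map_toList]
      rw [Finset.sum_eq_single A]
      · simp [List.count_replicate]
      · intro B _ hBA
        simp [List.count_replicate, hBA]
      · intro h; exact absurd (Finset.mem_univ A) h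
    rw [h1, h2]
    have := hcap A
    omega
  refine ⟨s, hcount, ?_⟩
  -- the main invariant
  have main : ∀ i : ℕ, (beltState N d s i).1 = (List.range i).map b ∧
      ((beltState N d s i).2 = injL i ++ pad ∨
        ((beltState N d s i).2 = [] ∧ injL i = [])) := by
    intro i
    induction i with
    | zero =>
        constructor
        · rfl
        · left; rw [hs]; rfl
    | succ n ih =>
        obtain ⟨hpre, hrem⟩ := ih
        have hcnt : ∀ B : α, (beltState N d s n).1.count (some B) = bcnt b n B := by
          intro B; rw [hpre]; rfl
        have hlenp : (beltState N d s n).1.length = n := length_pre N d s n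
        have hred : (beltState N d s n).1.reduceOption.length = ∑ A : α, bcnt b n A := by
          rw [reduceOption_length_eq]
          exact Finset.sum_congr rfl fun A _ => hcnt A
        have hgdk : N ≤ n → (beltState N d s n).1.getD
            ((beltState N d s n).1.length - N) none = b (n - N) := by
          intro hNn
          rw [hlenp, hpre]
          exact getD_map_range _ (Nat.sub_lt (by omega) hN)
        have hgoal1 : ∀ (o : Option α), (beltStep N d (beltState N d s n).1
            (beltState N d s n).2).1 = o → o = b n →
            (beltState N d s (n+1)).1 = (List.range (n+1)).map b := by
          intro o h1 h2
          rw [beltState_succ]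
          simp only
          rw [h1, h2, hpre, List.range_succ, List.map_append]
          rfl
        by_cases htm : (beltState N d s n).1.reduceOption.length = ∑ A : α, d A
        · -- total demand met: slot stays empty
          have hbn : b n = none := by
            apply hsum_none n _ n le_rfl
            rw [← hred]; exact htm
          have hstep : beltStep N d (beltState N d s n).1 (beltState N d s n).2
              = (none, (beltState N d s n).2) := by
            simp only [beltStep]; rw [if_pos htm]
          constructor
          · exact hgoal1 none (by rw [hstep]) hbn.symm
          · have hnone : injAt N b n = none := by
              unfold injAt
              split
              · exact hbn
              · rfl
            have hLeq := hinjL_none n hnone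
            rw [beltState_succ, hstep]
            simp only
            rw [← hLeq]
            exact hrem
        · by_cases hkp : N ≤ (beltState N d s n).1.length ∧ ∃ A : α,
              (beltState N d s n).1.getD ((beltState N d s n).1.length - N) none = some A ∧
              (beltState N d s n).1.count (some A) < d A
          · -- keep the mould from N slots earlier
            obtain ⟨hNn, A, hA, hAc⟩ := hkp
            have hNn' : N ≤ n := by rwa [hlenp] at hNn
            have hprev : b (n - N) = some A := by rw [← hgdk hNn']; exact hA
            have hAc' : bcnt b n A < d A := by rw [← hcnt]; exact hAc
            have hbn : b n = some A := hbnext n A hNn' hprev hAc'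
            have hstep : beltStep N d (beltState N d s n).1 (beltState N d s n).2
                = ((beltState N d s n).1.getD ((beltState N d s n).1.length - N) none,
                  (beltState N d s n).2) := by
              simp only [beltStep]
              rw [if_neg htm, if_pos ⟨hNn, A, hA, hAc⟩]
            constructor
            · exact hgoal1 _ (by rw [hstep]) (by rw [hA, hbn])
            · have hnone : injAt N b n = none := by
                unfold injAt
                rw [if_neg]
                push_neg
                refine ⟨by omega, ?_⟩
                rw [hprev, hbn]
              have hLeq := hinjL_none n hnone
              rw [beltState_succ, hstep]
              simp only
              rw [← hLeq]
              exact hrem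
          · -- pointer branch
            rcases hbn : b n with _ | A
            · -- slot must stay empty
              have hnoinj : ∀ j, n ≤ j → injAt N b j = none := by
                intro j hj
                rcases h : injAt N b j with _ | B
                · rfl
                · have hInj := injAt_eq_some.mp h
                  have := hE B j n hInj hbn
                  omega
              have hLnil : injL n = [] := hinjL_nil n hnoinj
              have hLnil' : injL (n+1) = [] := hinjL_nil (n+1) (fun j hj => hnoinj j (by omega))
              have hdw : (beltState N d s n).2.dropWhile
                  (fun B => decide (d B ≤ (beltState N d s n).1.count (some B))) = [] := by
                rw [List.dropWhile_eq_nil_iff]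
                intro B hB
                have hBpad : B ∈ pad := by
                  rcases hrem with hrem | ⟨hrem, _⟩
                  · rw [hrem, hLnil] at hB
                    simpa using hB
                  · rw [hrem] at hB
                    simp at hB
                have hu := hpad_mem B hBpad
                have hd := hdone n B hbn hu
                rw [hcnt B, hd]
                simp
              have hstep : beltStep N d (beltState N d s n).1 (beltState N d s n).2
                  = (none, []) := by
                simp only [beltStep]
                rw [if_neg htm, if_neg hkp, hdw]
              constructor
              · exact hgoal1 none (by rw [hstep]) hbn.symm
              · right
                rw [beltState_succ, hstep]
                exact ⟨rfl, hLnil'⟩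
            · -- injection step
              have hInj : Injected N b A n := by
                refine ⟨hbn, ?_⟩
                by_contra hcon
                push_neg at hcon
                obtain ⟨h1, h2⟩ := hcon
                refine hkp ⟨by rw [hlenp]; omega, A, ?_, ?_⟩
                · rw [hgdk (by omega)]; exact h2
                · rw [hcnt]; exact hinj_cnt n A hbn
              have hiM : n < M := hMlt n (by rw [hbn]; simp)
              have hsome : injAt N b n = some A := injAt_eq_some.mpr hInj
              have hLeq : injL n = A :: injL (n+1) := by
                rw [hinjL_step n hiM, hsome]; rfl
              have hremEq : (beltState N d s n).2 = A :: (injL (n+1) ++ pad) := by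
                rcases hrem with hrem | ⟨_, hLn⟩
                · rw [hrem, hLeq]; rfl
                · rw [hLn] at hLeq; exact absurd hLeq (by simp)
              have hdw : (beltState N d s n).2.dropWhile
                  (fun B => decide (d B ≤ (beltState N d s n).1.count (some B)))
                  = A :: (injL (n+1) ++ pad) := by
                rw [hremEq, List.dropWhile_cons, if_neg]
                simp only [decide_eq_true_eq, not_le]
                rw [hcnt A]
                exact hinj_cnt n A hbn
              have hstep : beltStep N d (beltState N d s n).1 (beltState N d s n).2
                  = (some A, injL (n+1) ++ pad) := by
                simp only [beltStep]
                rw [if_neg htm, if_neg hkp, hdw]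
              constructor
              · exact hgoal1 (some A) (by rw [hstep]) hbn.symm
              · left
                rw [beltState_succ, hstep]
  intro i
  unfold corrBelt
  rw [(main (i+1)).1]
  exact getD_map_range b (by omega)

end Aux4

/-- **Observation 5.** A belt assignment `b` satisfies Properties (E) and
(F) if and only if there is an injection sequence `s` (containing each type
`A` exactly `c A` times) whose corresponding belt function equals `b`. -/
theorem statement7 [Fintype α] [DecidableEq α] (N : ℕ) (hN : 0 < N)
    (d c : α → ℕ) (hd : ∀ A, 0 < d A) (hc : ∀ A, 0 < c A)
    (b : ℕ → Option α) (hb : IsBeltAssignment N d c b) :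
    (PropE N b ∧ PropF N c b) ↔
      ∃ s : List α, (∀ A : α, s.count A = c A) ∧ ∀ i : ℕ, corrBelt N d s i = b i := by
  obtain ⟨hfin, hncard, hstay, hcap⟩ := hb
  constructor
  · rintro ⟨hE, hF⟩
    exact forward_exists N hN d c b hfin hncard hstay hcap hE hF
  · rintro ⟨s, hcount, hcb⟩
    have hfun : corrBelt N d s = b := funext hcb
    subst hfun
    exact ⟨propE_corr N d s hN,
      propF_corr N d s c hN (fun A => (hfin A).subset fun j hj => hj.1) hcount⟩
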